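/- The recurrence |AI_{2n+1}(4321)| = |AI_{2n}(4321)| + |AI_{2n−3}(4321)| holds, where AI_m(4321) denotes the set of alternating involutions of length m avoiding 4321. -/

import Mathlib

/-- A permutation is an involution if it equals its inverse. -/
def IsInvolution {n : ℕ} (π : Equiv.Perm (Fin n)) : Prop :=
  ∀ i, π (π i) = i

/-- `π` is alternating: `π i < π (i+1)` iff `i` is odd (1-based positions). -/
def IsAlternating {n : ℕ} (π : Equiv.Perm (Fin n)) : Prop :=
  ∀ (i : Fin n) (h : (i : ℕ) + 1 < n), (π i < π ⟨(i : ℕ) + 1, h⟩ ↔ Odd ((i : ℕ) + 1))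

/-- `π` is reverse alternating: `π i > π (i+1)` iff `i` is odd (1-based positions). -/
def IsRevAlternating {n : ℕ} (π : Equiv.Perm (Fin n)) : Prop :=
  ∀ (i : Fin n) (h : (i : ℕ) + 1 < n), (π ⟨(i : ℕ) + 1, h⟩ < π i ↔ Odd ((i : ℕ) + 1))

/-- `σ` contains the pattern `τ`. -/
def Contains {n k : ℕ} (σ : Equiv.Perm (Fin n)) (τ : Equiv.Perm (Fin k)) : Prop :=
  ∃ f : Fin k → Fin n, StrictMono f ∧ ∀ a b : Fin k, σ (f a) < σ (f b) ↔ τ a < τ b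

/-- `σ` avoids the pattern `τ`. -/
def Avoids {n k : ℕ} (σ : Equiv.Perm (Fin n)) (τ : Equiv.Perm (Fin k)) : Prop :=
  ¬ Contains σ τ
def p123 : Equiv.Perm (Fin 3) := ⟨![0,1,2], ![0,1,2], by decide, by decide⟩
def p132 : Equiv.Perm (Fin 3) := ⟨![0,2,1], ![0,2,1], by decide, by decide⟩
def p321 : Equiv.Perm (Fin 3) := ⟨![2,1,0], ![2,1,0], by decide, by decide⟩
def p1234 : Equiv.Perm (Fin 4) := ⟨![0,1,2,3], ![0,1,2,3], by decide, by decide⟩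
def p4321 : Equiv.Perm (Fin 4) := ⟨![3,2,1,0], ![3,2,1,0], by decide, by decide⟩
def p3412 : Equiv.Perm (Fin 4) := ⟨![2,3,0,1], ![2,3,0,1], by decide, by decide⟩
def p3421 : Equiv.Perm (Fin 4) := ⟨![2,3,1,0], ![3,2,0,1], by decide, by decide⟩
def p4312 : Equiv.Perm (Fin 4) := ⟨![3,2,0,1], ![2,3,1,0], by decide, by decide⟩
def p2431 : Equiv.Perm (Fin 4) := ⟨![1,3,2,0], ![3,0,2,1], by decide, by decide⟩
def p4132 : Equiv.Perm (Fin 4) := ⟨![3,0,2,1], ![1,3,2,0], by decide, by decide⟩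

set_option maxHeartbeats 1000000
namespace AIRec

def Good (m : ℕ) (f : ℕ → ℕ) : Prop :=
  (∀ i, i < m → f i < m) ∧ (∀ i, f (f i) = i) ∧ (∀ i, m ≤ i → f i = i) ∧
  (∀ i, i + 1 < m → (f i < f (i+1) ↔ (i+1) % 2 = 1)) ∧
  (∀ a b c d, a < b → b < c → c < d → d < m →
    f b < f a → f c < f b → f d < f c → False)




def pick {α : Type*} (a b c d : α) : Fin 4 → α := fun x =>
  match x with
  | ⟨0, _⟩ => a
  | ⟨1, _⟩ => b
  | ⟨2, _⟩ => c
  | ⟨3, _⟩ => d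

theorem contains4321_iff {m : ℕ} (σ : Equiv.Perm (Fin m)) :
    Contains σ p4321 ↔ ∃ a b c d : Fin m, a < b ∧ b < c ∧ c < d ∧
      σ b < σ a ∧ σ c < σ b ∧ σ d < σ c := by
  constructor
  · rintro ⟨g, hmono, hpat⟩
    refine ⟨g 0, g 1, g 2, g 3, hmono (by decide), hmono (by decide), hmono (by decide),
      ?_, ?_, ?_⟩
    · exact (hpat 1 0).2 (by decide)
    · exact (hpat 2 1).2 (by decide)
    · exact (hpat 3 2).2 (by decide)
  · rintro ⟨a, b, c, d, hab, hbc, hcd, v1, v2, v3⟩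
    have hp : ∀ x y : Fin 4, p4321 x < p4321 y ↔ (y : ℕ) < (x : ℕ) := by decide
    have v21 : σ c < σ a := v2.trans v1
    have v32 : σ d < σ b := v3.trans v2
    have v31 : σ d < σ a := v3.trans v21
    refine ⟨pick a b c d, ?_, ?_⟩
    · rintro ⟨xv, hx⟩ ⟨yv, hy⟩ h
      simp only [Fin.mk_lt_mk] at h
      interval_cases xv <;> interval_cases yv <;>
        first
        | omega
        | exact hab
        | exact hbc
        | exact hcd
        | exact hab.trans hbc
        | exact hbc.trans hcd
        | exact (hab.trans hbc).trans hcd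
    · rintro ⟨xv, hx⟩ ⟨yv, hy⟩
      rw [hp]
      simp only []
      interval_cases xv <;> interval_cases yv <;> simp only [pick] <;>
        constructor <;> intro h <;>
        first
        | omega
        | exact v1
        | exact v2
        | exact v3
        | exact v21
        | exact v32
        | exact v31
        | exact absurd h (lt_irrefl _)
        | exact absurd h (lt_asymm v1)
        | exact absurd h (lt_asymm v2)
        | exact absurd h (lt_asymm v3)
        | exact absurd h (lt_asymm v21)
        | exact absurd h (lt_asymm v32)
        | exact absurd h (lt_asymm v31)


def toModel {m : ℕ} (π : Equiv.Perm (Fin m)) : ℕ → ℕ :=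
  fun i => if h : i < m then (π ⟨i, h⟩ : ℕ) else i

theorem good_toModel {m : ℕ} (π : Equiv.Perm (Fin m))
    (h1 : IsInvolution π) (h2 : IsAlternating π) (h3 : Avoids π p4321) :
    Good m (toModel π) := by
  refine ⟨?_, ?_, ?_, ?_, ?_⟩
  · intro i hi; simp only [toModel, dif_pos hi]; exact (π ⟨i, hi⟩).2
  · intro i
    by_cases hi : i < m
    · have h' : ((π ⟨i, hi⟩ : Fin m) : ℕ) < m := (π ⟨i, hi⟩).2
      simp only [toModel, dif_pos hi, dif_pos h']
      rw [show (⟨((π ⟨i, hi⟩ : Fin m) : ℕ), h'⟩ : Fin m) = π ⟨i, hi⟩ from rfl, h1]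
    · simp only [toModel, dif_neg hi]
  · intro i hi; simp only [toModel, dif_neg (not_lt.2 hi)]
  · intro i hi
    have hi' : i < m := by omega
    have := h2 ⟨i, hi'⟩ hi
    simp only [toModel, dif_pos hi', dif_pos hi]
    rw [← Nat.odd_iff]
    exact (Fin.lt_iff_val_lt_val.symm).trans this
  · intro a b c d hab hbc hcd hd hba hcb hdc
    have ha : a < m := by omega
    have hb : b < m := by omega
    have hc : c < m := by omega
    simp only [toModel, dif_pos ha, dif_pos hb, dif_pos hc, dif_pos hd] at hba hcb hdc
    exact h3 ((contains4321_iff π).2 ⟨⟨a, ha⟩, ⟨b, hb⟩, ⟨c, hc⟩, ⟨d, hd⟩,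
      hab, hbc, hcd, hba, hcb, hdc⟩)

def ofModel {m : ℕ} (f : {f : ℕ → ℕ // Good m f}) : Equiv.Perm (Fin m) where
  toFun i := ⟨f.1 i, f.2.1 i i.2⟩
  invFun i := ⟨f.1 i, f.2.1 i i.2⟩
  left_inv i := Fin.ext (f.2.2.1 i)
  right_inv i := Fin.ext (f.2.2.1 i)

theorem ofModel_props {m : ℕ} (f : {f : ℕ → ℕ // Good m f}) :
    IsInvolution (ofModel f) ∧ IsAlternating (ofModel f) ∧ Avoids (ofModel f) p4321 := by
  obtain ⟨f, hr, hinv, hid, halt, hav⟩ := f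
  refine ⟨fun i => Fin.ext (hinv i), ?_, ?_⟩
  · intro i h
    rw [Nat.odd_iff]
    have := halt i h
    simpa [ofModel, Fin.lt_def] using this
  · intro hc
    obtain ⟨a, b, c, d, hab, hbc, hcd, hba, hcb, hdc⟩ := (contains4321_iff _).1 hc
    exact hav a b c d hab hbc hcd d.2 hba hcb hdc

def modelEquiv (m : ℕ) :
    {π : Equiv.Perm (Fin m) // IsInvolution π ∧ IsAlternating π ∧ Avoids π p4321} ≃
    {f : ℕ → ℕ // Good m f} where
  toFun π := ⟨toModel π.1, good_toModel π.1 π.2.1 π.2.2.1 π.2.2.2⟩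
  invFun f := ⟨ofModel f, ofModel_props f⟩
  left_inv π := by
    apply Subtype.ext
    apply Equiv.ext
    intro i
    apply Fin.ext
    simp only [ofModel, toModel, Equiv.coe_fn_mk, dif_pos i.2]
  right_inv f := by
    apply Subtype.ext
    funext i
    by_cases hi : i < m
    · simp only [toModel, ofModel, dif_pos hi, Equiv.coe_fn_mk]
    · simp only [toModel, dif_neg hi]
      exact (f.2.2.2.1 i (not_lt.1 hi)).symm


section Core
variable {n : ℕ} {f g t : ℕ → ℕ}

theorem good_inj {m : ℕ} (hf : Good m f) {a b : ℕ} (h : f a = f b) : a = b := by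
  have := congrArg f h; rwa [hf.2.1, hf.2.1] at this

def Pred (n : ℕ) (f : ℕ → ℕ) : Prop := f (2*n-2) = 2*n-2 ∧ f (2*n) = 2*n-3

instance (n : ℕ) (f : ℕ → ℕ) : Decidable (Pred n f) := by unfold Pred; infer_instance

def phiInv (n : ℕ) (f : ℕ → ℕ) : ℕ → ℕ := fun i =>
  if i = 2*n-1 then f (2*n) else if i = f (2*n) then 2*n-1 else if 2*n ≤ i then i else f i

def phi (n : ℕ) (g : ℕ → ℕ) : ℕ → ℕ := fun i =>
  if i = 2*n then g (2*n-1) else if i = g (2*n-1) then 2*n else if i = 2*n-1 then 2*n-1 else g i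

def psiInv (n : ℕ) (f : ℕ → ℕ) : ℕ → ℕ := fun i => if i < 2*n-3 then f i else i

def psi (n : ℕ) (t : ℕ → ℕ) : ℕ → ℕ := fun i =>
  if i < 2*n-3 then t i else if i = 2*n-3 then 2*n else if i = 2*n then 2*n-3 else i

/-- `f (2n) < f (2n-1)`. -/
theorem L2 (hn : 2 ≤ n) (hf : Good (2*n+1) f) : f (2*n) < f (2*n-1) := by
  obtain ⟨hr, hinv, hid, halt, hav⟩ := hf
  have h := halt (2*n-1) (by omega)
  rw [show 2*n-1+1 = 2*n by omega] at h
  have h2 : ¬ (f (2*n-1) < f (2*n)) := by rw [h]; omega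
  have hne : f (2*n-1) ≠ f (2*n) := fun hh => by
    have := congrArg f hh; rw [hinv, hinv] at this; omega
  omega

/-- position of the max: `f (2n) ≤ 2n-1`. -/
theorem L2' (hn : 2 ≤ n) (hf : Good (2*n+1) f) : f (2*n) ≤ 2*n - 1 := by
  have h1 := L2 hn hf
  have h2 := hf.1 (2*n-1) (by omega)
  omega

/-- Lemma A : `f (2n-1) ∈ {2n-1, 2n}`. -/
theorem L1 (hn : 2 ≤ n) (hf : Good (2*n+1) f) : f (2*n-1) = 2*n-1 ∨ f (2*n-1) = 2*n := by
  by_contra hcon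
  push_neg at hcon
  have hcd := L2 hn hf
  obtain ⟨hr, hinv, hid, halt, hav⟩ := hf
  have hdlt : f (2*n-1) < 2*n+1 := hr _ (by omega)
  have hd2 : f (2*n-1) ≤ 2*n-2 := by omega
  have hfd : f (f (2*n-1)) = 2*n-1 := hinv _
  have hfc : f (f (2*n)) = 2*n := hinv _
  exact hav (f (2*n)) (f (2*n-1)) (2*n-1) (2*n) hcd (by omega) (by omega) (by omega)
    (by omega) (by omega) (by omega)

/-- `f (2n)` is odd. -/
theorem L3 (hn : 2 ≤ n) (hf : Good (2*n+1) f) : f (2*n) % 2 = 1 := by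
  by_contra hcon
  have hc2 := L2' hn hf
  obtain ⟨hr, hinv, hid, halt, hav⟩ := hf
  have hfc : f (f (2*n)) = 2*n := hinv _
  have h := halt (f (2*n)) (by omega)
  have h2 : f (f (2*n) + 1) < 2*n+1 := hr _ (by omega)
  rw [show (f (2*n) + 1) % 2 = 1 by omega] at h
  have := h.2 rfl
  omega

/-- key dichotomy: under `¬ Pred`, `f (2n-2) < f (2n)`. -/
theorem L4 (hn : 2 ≤ n) (hf : Good (2*n+1) f) (hP : ¬ Pred n f) : f (2*n-2) < f (2*n) := by
  have hL1 := L1 hn hf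
  have hc2 := L2' hn hf
  have hc3 := L3 hn hf
  obtain ⟨hr, hinv, hid, halt, hav⟩ := hf
  have hfc : f (f (2*n)) = 2*n := hinv _
  have hfE : f (f (2*n-2)) = 2*n-2 := hinv _
  have hElt : f (2*n-2) < 2*n+1 := hr _ (by omega)
  rcases hL1 with h1 | h1
  · -- case II : f (2n-1) = 2n-1
    have hcne : f (2*n) ≠ 2*n-1 := fun hh => by rw [hh, h1] at hfc; omega
    have hcle : f (2*n) ≤ 2*n-3 := by omega
    have hEne2 : f (2*n-2) ≠ 2*n-2 := by
      intro hE
      -- then Pred's first conjunct holds, so f (2n) ≠ 2n-3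
      have hcne3 : f (2*n) ≠ 2*n-3 := fun hh => hP ⟨hE, hh⟩
      have h3 := halt (2*n-3) (by omega)
      rw [show 2*n-3+1 = 2*n-2 by omega, hE] at h3
      have h4 : ¬ (f (2*n-3) < 2*n-2) := by rw [h3]; omega
      have h5 : f (2*n-3) < 2*n+1 := hr _ (by omega)
      have h6 : f (2*n-3) ≠ 2*n-2 := fun hh => by
        have := congrArg f hh; rw [hinv, hE] at this; omega
      have h7 : f (2*n-3) ≠ 2*n-1 := fun hh => by
        have := congrArg f hh; rw [hinv, h1] at this; omega
      have h8 : f (2*n-3) = 2*n := by omega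
      have := congrArg f h8; rw [hinv] at this
      omega
    have hEne1 : f (2*n-2) ≠ 2*n-1 := fun hh => by
      have := congrArg f hh; rw [hinv, h1] at this; omega
    have hEne0 : f (2*n-2) ≠ 2*n := fun hh => by
      have := congrArg f hh; rw [hinv] at this; omega
    have hEne : f (2*n-2) ≠ f (2*n) := fun hh => by
      have := good_inj ⟨hr, hinv, hid, halt, hav⟩ hh; omega
    by_contra hcon
    -- then c < E ≤ 2n-3
    exact hav (f (2*n)) (f (2*n-2)) (2*n-2) (2*n) (by omega) (by omega) (by omega)
      (by omega) (by omega) (by omega) (by omega)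
  · -- case I : f (2n-1) = 2n, so f (2n) = 2n-1
    have hc : f (2*n) = 2*n-1 := by
      have := congrArg f h1; rw [hinv] at this; omega
    have hEne1 : f (2*n-2) ≠ 2*n-1 := fun hh => by
      have := congrArg f hh; rw [hinv] at this; omega
    have hEne0 : f (2*n-2) ≠ 2*n := fun hh => by
      have := congrArg f hh; rw [hinv] at this; omega
    omega

theorem good_phiInv (hn : 2 ≤ n) (hf : Good (2*n+1) f) (hP : ¬ Pred n f) :
    Good (2*n) (phiInv n f) := by
  have hc2 := L2' hn hf
  have hc3 := L3 hn hf
  have hE := L4 hn hf hP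
  have hL1 := L1 hn hf
  obtain ⟨hr, hinv, hid, halt, hav⟩ := hf
  have hfc : f (f (2*n)) = 2*n := hinv _
  have Hsmall : ∀ i, i < 2*n-1 → i ≠ f (2*n) →
      f i ≤ 2*n-2 ∧ f i ≠ f (2*n) ∧ f i ≠ 2*n-1 := by
    intro i hi hic
    have h0 : f i < 2*n+1 := hr _ (by omega)
    have h1 : f i ≠ 2*n := fun hh => by
      have := congrArg f hh; rw [hinv] at this; exact hic this
    have h2 : f i ≠ 2*n-1 := fun hh => by
      have := congrArg f hh; rw [hinv] at this
      rcases hL1 with h | h <;> omega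
    have h3 : f i ≠ f (2*n) := fun hh => by
      have := congrArg f hh; rw [hinv, hinv] at this; omega
    exact ⟨by omega, h3, h2⟩
  have e1 : phiInv n f (2*n-1) = f (2*n) := by simp [phiInv]
  have e2 : phiInv n f (f (2*n)) = 2*n-1 := by
    by_cases h : f (2*n) = 2*n-1
    · simp only [phiInv, if_pos h]; omega
    · simp [phiInv, h]
  have e3 : ∀ i, 2*n ≤ i → phiInv n f i = i := by
    intro i hi
    simp only [phiInv]
    rw [if_neg (by omega), if_neg (by omega), if_pos hi]
  have e4 : ∀ i, i < 2*n-1 → i ≠ f (2*n) → phiInv n f i = f i := by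
    intro i hi hic
    simp only [phiInv]
    rw [if_neg (by omega), if_neg hic, if_neg (by omega)]
  have hrange : ∀ i, i < 2*n → phiInv n f i < 2*n := by
    intro i hi
    by_cases h1 : i = 2*n-1
    · rw [h1, e1]; omega
    · by_cases h2 : i = f (2*n)
      · rw [h2, e2]; omega
      · rw [e4 i (by omega) h2]
        have := Hsmall i (by omega) h2
        omega
  refine ⟨hrange, ?_, ?_, ?_, ?_⟩
  · -- involution
    intro i
    by_cases h1 : i = 2*n-1
    · rw [h1, e1, e2]
    · by_cases h2 : i = f (2*n)
      · rw [h2, e2, e1]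
      · by_cases h3 : 2*n ≤ i
        · rw [e3 i h3, e3 i h3]
        · have hi : i < 2*n-1 := by omega
          obtain ⟨s1, s2, s3⟩ := Hsmall i hi h2
          rw [e4 i hi h2, e4 (f i) (by omega) s2]
          exact hinv i
  · intro i hi; exact e3 i hi
  · -- alternating
    intro i hi
    by_cases hA : i = 2*n-2
    · subst hA
      rw [show 2*n-2+1 = 2*n-1 by omega, e1, e4 (2*n-2) (by omega) (fun hh => by omega)]
      constructor
      · intro _; omega
      · intro _; omega
    · by_cases hB : i = f (2*n)
      · -- i = c, i+1 ≤ 2n-1, c even+... c odd so (c+1)%2=0, LHS must be false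
        have hc' : f (2*n) ≤ 2*n - 3 := by omega
        rw [hB, e2]
        rw [e4 (f (2*n) + 1) (by omega) (by omega)]
        obtain ⟨s1, s2, s3⟩ := Hsmall (f (2*n) + 1) (by omega) (by omega)
        constructor
        · intro h; omega
        · intro h; omega
      · by_cases hC : i + 1 = f (2*n)
        · -- i = c - 1
          rw [hC, e2, e4 i (by omega) (by omega)]
          obtain ⟨s1, s2, s3⟩ := Hsmall i (by omega) (by omega)
          constructor
          · intro _; omega
          · intro _; omega
        · -- generic
          have hi1 : i + 1 < 2*n-1 := by omega
          rw [e4 i (by omega) hB, e4 (i+1) hi1 hC]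
          exact halt i (by omega)
  · -- avoiding
    intro a b b2 d hab hbb2 hb2d hd v1 v2 v3
    have hbc : b ≠ f (2*n) := fun hh => by
      rw [hh, e2] at v1
      have := hrange a (by omega)
      omega
    have hb2c : b2 ≠ f (2*n) := fun hh => by
      rw [hh, e2] at v2
      have := hrange b (by omega)
      omega
    have hσa : phiInv n f a ≤ f a := by
      by_cases h2 : a = f (2*n)
      · rw [h2, e2]
        have := congrArg f h2
        rw [hfc] at this
        omega
      · rw [e4 a (by omega) h2]
    have hfb : phiInv n f b = f b := e4 b (by omega) hbc
    have hfb2 : phiInv n f b2 = f b2 := e4 b2 (by omega) hb2c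
    by_cases hD : d = 2*n-1
    · -- use (a, b, b2, 2n) in f
      rw [hD, e1] at v3
      refine hav a b b2 (2*n) hab hbb2 (by omega) (by omega) ?_ ?_ ?_
      · rw [← hfb]; omega
      · rw [← hfb2, ← hfb]; exact v2
      · rw [← hfb2]; exact v3
    · have hdc : d ≠ f (2*n) := fun hh => by
        rw [hh, e2] at v3
        have := hrange b2 (by omega)
        omega
      have hfd : phiInv n f d = f d := e4 d (by omega) hdc
      refine hav a b b2 d hab hbb2 hb2d (by omega) ?_ ?_ ?_
      · rw [← hfb]; omega
      · rw [← hfb2, ← hfb]; exact v2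
      · rw [← hfd, ← hfb2]; exact v3

theorem good_phi (hn : 2 ≤ n) (hg : Good (2*n) g) : Good (2*n+1) (phi n g) := by
  obtain ⟨hr, hinv, hid, halt, hav⟩ := hg
  have hgc : g (g (2*n-1)) = 2*n-1 := hinv _
  have hc1 : g (2*n-1) < 2*n := hr _ (by omega)
  have hc3 : g (2*n-1) % 2 = 1 := by
    by_contra hcon
    have hodd : (2*n-1) % 2 = 1 := by omega
    have hlt : g (2*n-1) < 2*n-1 := by
      rcases Nat.lt_or_ge (g (2*n-1)) (2*n-1) with h | h
      · exact h
      · have : g (2*n-1) = 2*n-1 := by omega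
        rw [this] at hcon; omega
    have h := halt (g (2*n-1)) (by omega)
    rw [hgc] at h
    have h2 : g (g (2*n-1) + 1) < 2*n := hr _ (by omega)
    have h3 : 2*n-1 < g (g (2*n-1) + 1) := h.2 (by omega)
    omega
  have hE : g (2*n-2) < g (2*n-1) := by
    have h := halt (2*n-2) (by omega)
    rw [show 2*n-2+1 = 2*n-1 by omega] at h
    exact h.2 (by omega)
  have Hsmall : ∀ i, i < 2*n → i ≠ g (2*n-1) → i ≠ 2*n-1 →
      g i ≤ 2*n-2 ∧ g i ≠ g (2*n-1) := by
    intro i hi h1 h2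
    have h0 : g i < 2*n := hr _ hi
    have h3 : g i ≠ 2*n-1 := fun hh => by
      have := congrArg g hh; rw [hinv] at this; exact h1 this
    have h4 : g i ≠ g (2*n-1) := fun hh => by
      have := congrArg g hh; rw [hinv, hinv] at this; exact h2 this
    exact ⟨by omega, h4⟩
  have E1 : phi n g (2*n) = g (2*n-1) := by simp [phi]
  have E2 : phi n g (g (2*n-1)) = 2*n := by
    have h : ¬ (g (2*n-1) = 2*n) := by omega
    simp [phi, h]
  have E3 : g (2*n-1) ≠ 2*n-1 → phi n g (2*n-1) = 2*n-1 := by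
    intro h
    simp only [phi]
    rw [if_neg (by omega), if_neg (fun hh => h hh.symm)]
    simp
  have E3' : 2*n-1 ≤ phi n g (2*n-1) := by
    by_cases h : g (2*n-1) = 2*n-1
    · have e := E2; rw [h] at e; rw [e]; omega
    · rw [E3 h]
  have E4 : ∀ i, i < 2*n → i ≠ g (2*n-1) → i ≠ 2*n-1 → phi n g i = g i := by
    intro i hi h1 h2
    simp only [phi]
    rw [if_neg (by omega), if_neg h1, if_neg h2]
  have E5 : ∀ i, 2*n+1 ≤ i → phi n g i = i := by
    intro i hi
    simp only [phi]
    rw [if_neg (by omega), if_neg (by omega), if_neg (by omega)]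
    exact hid i (by omega)
  have hrangeπ : ∀ i, i < 2*n+1 → phi n g i < 2*n+1 := by
    intro i hi
    by_cases h1 : i = 2*n
    · rw [h1, E1]; omega
    · by_cases h2 : i = g (2*n-1)
      · rw [h2, E2]; omega
      · by_cases h3 : i = 2*n-1
        · rw [h3]; by_cases h : g (2*n-1) = 2*n-1
          · omega
          · rw [E3 h]; omega
        · rw [E4 i (by omega) h2 h3]
          have := hr i (by omega)
          omega
  have hinvπ : ∀ i, phi n g (phi n g i) = i := by
    intro i
    by_cases h1 : i = 2*n
    · rw [h1, E1, E2]
    · by_cases h2 : i = g (2*n-1)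
      · rw [h2, E2, E1]
      · by_cases h3 : i = 2*n-1
        · have h : g (2*n-1) ≠ 2*n-1 := fun hh => h2 (h3.trans hh.symm)
          rw [h3, E3 h, E3 h]
        · by_cases h4 : 2*n+1 ≤ i
          · rw [E5 i h4, E5 i h4]
          · have hi : i < 2*n := by omega
            obtain ⟨s1, s2⟩ := Hsmall i hi h2 h3
            rw [E4 i hi h2 h3, E4 (g i) (by omega) s2 (by omega)]
            exact hinv i
  have hval2n : ∀ i, phi n g i = 2*n → i = g (2*n-1) := by
    intro i hh
    have := congrArg (phi n g) hh
    rw [hinvπ, E1] at this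
    omega
  have hval2n1 : ∀ i, i ≤ 2*n-2 → phi n g i ≠ 2*n-1 := by
    intro i hi hh
    have := congrArg (phi n g) hh
    rw [hinvπ] at this
    by_cases h : g (2*n-1) = 2*n-1
    · have e := E2; rw [h] at e; rw [e] at this; omega
    · rw [E3 h] at this; omega
  refine ⟨hrangeπ, hinvπ, E5, ?_, ?_⟩
  · -- alternating
    intro i hi
    by_cases hA : i = 2*n-1
    · rw [hA, show 2*n-1+1 = 2*n by omega, E1]
      constructor
      · intro h; omega
      · intro h; omega
    · by_cases hB : i = 2*n-2
      · rw [hB, show 2*n-2+1 = 2*n-1 by omega,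
          E4 (2*n-2) (by omega) (by omega) (by omega)]
        constructor
        · intro _; omega
        · intro _; omega
      · by_cases hC : i = g (2*n-1)
        · -- c ≤ 2n-3 here
          have hcle : g (2*n-1) ≤ 2*n-3 := by omega
          rw [hC, E2, E4 (g (2*n-1) + 1) (by omega) (by omega) (by omega)]
          obtain ⟨s1, s2⟩ := Hsmall (g (2*n-1) + 1) (by omega) (by omega) (by omega)
          constructor
          · intro h; omega
          · intro h; omega
        · by_cases hD : i + 1 = g (2*n-1)
          · rw [hD, E2, E4 i (by omega) (by omega) (by omega)]
            obtain ⟨s1, s2⟩ := Hsmall i (by omega) (by omega) (by omega)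
            constructor
            · intro _; omega
            · intro _; omega
          · rw [E4 i (by omega) hC (by omega), E4 (i+1) (by omega) hD (by omega)]
            exact halt i (by omega)
  · -- avoiding
    intro a b b2 d hab hbb2 hb2d hd v1 v2 v3
    have hbc : b ≠ g (2*n-1) := fun hh => by
      rw [hh, E2] at v1
      have := hrangeπ a (by omega)
      omega
    have hb2c : b2 ≠ g (2*n-1) := fun hh => by
      rw [hh, E2] at v2
      have := hrangeπ b (by omega)
      omega
    have hdc : d ≠ g (2*n-1) := fun hh => by
      rw [hh, E2] at v3
      have := hrangeπ b2 (by omega)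
      omega
    have gaval : b ≤ 2*n-2 → g b < g a := by
      intro hble
      have hπb : phi n g b = g b := E4 b (by omega) hbc (by omega)
      by_cases ha : a = g (2*n-1)
      · rw [ha, hgc]
        have h4 : phi n g b ≠ 2*n-1 := hval2n1 b hble
        have h5 : phi n g b ≠ 2*n := fun hh => by
          have := hval2n b hh; omega
        have h6 := hrangeπ b (by omega)
        omega
      · have hπa : phi n g a = g a := E4 a (by omega) ha (by omega)
        rw [← hπa, ← hπb]; exact v1
    by_cases hd1 : d = 2*n
    · have hb2ne : b2 ≠ 2*n-1 := by
        intro hh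
        have h1 : 2*n-1 ≤ phi n g b2 := hh ▸ E3'
        have h2 := hrangeπ b (by omega)
        have h3 : phi n g b = 2*n := by omega
        exact hbc (hval2n b h3)
      have hb2le : b2 ≤ 2*n-2 := by omega
      have hπb2 : phi n g b2 = g b2 := E4 b2 (by omega) hb2c hb2ne
      have hπb : phi n g b = g b := E4 b (by omega) hbc (by omega)
      rw [hd1, E1] at v3
      refine hav a b b2 (2*n-1) hab hbb2 (by omega) (by omega) (gaval (by omega)) ?_ ?_
      · rw [← hπb2, ← hπb]; exact v2
      · rw [← hπb2]; exact v3
    · by_cases hd2 : d = 2*n-1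
      · have h1 : 2*n-1 ≤ phi n g d := hd2 ▸ E3'
        have h2 := hrangeπ b2 (by omega)
        have h3 : phi n g b2 = 2*n := by omega
        exact hb2c (hval2n b2 h3)
      · have hdle : d ≤ 2*n-2 := by omega
        have hπd : phi n g d = g d := E4 d (by omega) hdc (by omega)
        have hπb2 : phi n g b2 = g b2 := E4 b2 (by omega) hb2c (by omega)
        have hπb : phi n g b = g b := E4 b (by omega) hbc (by omega)
        refine hav a b b2 d hab hbb2 hb2d (by omega) (gaval (by omega)) ?_ ?_
        · rw [← hπb2, ← hπb]; exact v2
        · rw [← hπd, ← hπb2]; exact v3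

theorem good_psi (hn : 2 ≤ n) (ht : Good (2*n-3) t) : Good (2*n+1) (psi n t) := by
  obtain ⟨hr, hinv, hid, halt, hav⟩ := ht
  have P1 : ∀ i, i < 2*n-3 → psi n t i = t i := by
    intro i hi; simp only [psi]; rw [if_pos hi]
  have P2 : psi n t (2*n-3) = 2*n := by
    simp only [psi]; rw [if_neg (by omega)]; simp
  have P3 : psi n t (2*n) = 2*n-3 := by
    simp only [psi]; rw [if_neg (by omega), if_neg (by omega)]; simp
  have P4 : ∀ i, 2*n-3 ≤ i → i ≠ 2*n-3 → i ≠ 2*n → psi n t i = i := by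
    intro i h1 h2 h3
    simp only [psi]; rw [if_neg (by omega), if_neg h2, if_neg h3]
  have hrange : ∀ i, i < 2*n+1 → psi n t i < 2*n+1 := by
    intro i hi
    by_cases h1 : i < 2*n-3
    · rw [P1 i h1]; have := hr i h1; omega
    · by_cases h2 : i = 2*n-3
      · rw [h2, P2]; omega
      · by_cases h3 : i = 2*n
        · rw [h3, P3]; omega
        · rw [P4 i (by omega) h2 h3]; omega
  have tailval : ∀ q, 2*n-3 ≤ q → q ≤ 2*n → 2*n-3 ≤ psi n t q := by
    intro q h1 h2
    by_cases h3 : q = 2*n-3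
    · rw [h3, P2]; omega
    · by_cases h4 : q = 2*n
      · rw [h4, P3]
      · rw [P4 q h1 h3 h4]; omega
  refine ⟨hrange, ?_, ?_, ?_, ?_⟩
  · intro i
    by_cases h1 : i < 2*n-3
    · have h0 := hr i h1
      rw [P1 i h1, P1 (t i) h0]; exact hinv i
    · by_cases h2 : i = 2*n-3
      · rw [h2, P2, P3]
      · by_cases h3 : i = 2*n
        · rw [h3, P3, P2]
        · rw [P4 i (by omega) h2 h3, P4 i (by omega) h2 h3]
  · intro i hi; exact P4 i (by omega) (by omega) (by omega)
  · intro i hi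
    by_cases h1 : i + 1 < 2*n-3
    · rw [P1 i (by omega), P1 (i+1) h1]; exact halt i h1
    · by_cases h2 : i + 1 = 2*n-3
      · rw [h2, P2, P1 i (by omega)]
        have := hr i (by omega)
        constructor
        · intro _; omega
        · intro _; omega
      · by_cases h3 : i = 2*n-3
        · rw [h3, P2, show 2*n-3+1 = 2*n-2 by omega, P4 (2*n-2) (by omega) (by omega) (by omega)]
          constructor
          · intro h; omega
          · intro h; omega
        · by_cases h4 : i = 2*n-2
          · rw [h4, show 2*n-2+1 = 2*n-1 by omega, P4 (2*n-2) (by omega) (by omega) (by omega),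
              P4 (2*n-1) (by omega) (by omega) (by omega)]
            constructor
            · intro _; omega
            · intro _; omega
          · -- i = 2n-1
            rw [show i = 2*n-1 by omega, show 2*n-1+1 = 2*n by omega, P3,
              P4 (2*n-1) (by omega) (by omega) (by omega)]
            constructor
            · intro h; omega
            · intro h; omega
  · intro a b b2 d hab hbb2 hb2d hd v1 v2 v3
    by_cases hd1 : d < 2*n-3
    · rw [P1 a (by omega), P1 b (by omega)] at v1
      rw [P1 b (by omega), P1 b2 (by omega)] at v2
      rw [P1 b2 (by omega), P1 d (by omega)] at v3
      exact hav a b b2 d hab hbb2 hb2d hd1 v1 v2 v3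
    · by_cases hb2' : b2 < 2*n-3
      · have h1 := tailval d (by omega) (by omega)
        rw [P1 b2 hb2'] at v3
        have := hr b2 hb2'
        omega
      · by_cases hb' : b < 2*n-3
        · have h1 := tailval b2 (by omega) (by omega)
          rw [P1 b hb'] at v2
          have := hr b hb'
          omega
        · -- b, b2, d all in [2n-3, 2n]
          have hb : b = 2*n-3 ∨ b = 2*n-2 := by omega
          have hb2 : b2 = 2*n-2 ∨ b2 = 2*n-1 := by omega
          have hdd : d = 2*n-1 ∨ d = 2*n := by omega
          have e2 := P2
          have e3 := P3
          have e4 := P4 (2*n-2) (by omega) (by omega) (by omega)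
          have e5 := P4 (2*n-1) (by omega) (by omega) (by omega)
          have hra := hrange a (by omega)
          rcases hb with hb | hb <;> rcases hb2 with hb2 | hb2 <;>
            rcases hdd with hdd | hdd <;> subst hb <;> subst hb2 <;> subst hdd <;>
            first
            | omega
            | (rw [e2] at v1; omega)
            | (rw [e4, e5] at v2; omega)
            | (rw [e5, e3] at v3; omega)
            | (rw [e4] at v2; rw [e5] at v2; omega)

theorem good_psiInv (hn : 2 ≤ n) (hf : Good (2*n+1) f) (hP : Pred n f) :
    Good (2*n-3) (psiInv n f) := by
  have hL1 := L1 hn hf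
  obtain ⟨hr, hinv, hid, halt, hav⟩ := hf
  obtain ⟨hP1, hP2⟩ := hP
  have hf3 : f (2*n-3) = 2*n := by
    have := congrArg f hP2; rw [hinv] at this; omega
  have hf1 : f (2*n-1) = 2*n-1 := by
    rcases hL1 with h | h
    · exact h
    · have := congrArg f h; rw [hinv] at this; omega
  have Hsm : ∀ i, i < 2*n-3 → f i < 2*n-3 := by
    intro i hi
    have h0 : f i < 2*n+1 := hr i (by omega)
    have h1 : f i ≠ 2*n-3 := fun hh => by
      have := congrArg f hh; rw [hinv, hf3] at this; omega
    have h2 : f i ≠ 2*n-2 := fun hh => by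
      have := congrArg f hh; rw [hinv, hP1] at this; omega
    have h3 : f i ≠ 2*n-1 := fun hh => by
      have := congrArg f hh; rw [hinv, hf1] at this; omega
    have h4 : f i ≠ 2*n := fun hh => by
      have := congrArg f hh; rw [hinv, hP2] at this; omega
    omega
  have Q1 : ∀ i, i < 2*n-3 → psiInv n f i = f i := by
    intro i hi; simp only [psiInv]; rw [if_pos hi]
  have Q2 : ∀ i, 2*n-3 ≤ i → psiInv n f i = i := by
    intro i hi; simp only [psiInv]; rw [if_neg (by omega)]
  refine ⟨?_, ?_, ?_, ?_, ?_⟩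
  · intro i hi; rw [Q1 i hi]; exact Hsm i hi
  · intro i
    by_cases hi : i < 2*n-3
    · rw [Q1 i hi, Q1 (f i) (Hsm i hi)]; exact hinv i
    · rw [Q2 i (by omega), Q2 i (by omega)]
  · intro i hi; exact Q2 i hi
  · intro i hi
    rw [Q1 i (by omega), Q1 (i+1) (by omega)]
    exact halt i (by omega)
  · intro a b b2 d hab hbb2 hb2d hd v1 v2 v3
    rw [Q1 a (by omega), Q1 b (by omega)] at v1
    rw [Q1 b (by omega), Q1 b2 (by omega)] at v2
    rw [Q1 b2 (by omega), Q1 d (by omega)] at v3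
    exact hav a b b2 d hab hbb2 hb2d (by omega) v1 v2 v3

theorem pred_psi (hn : 2 ≤ n) : Pred n (psi n t) := by
  constructor
  · simp only [psi]; rw [if_neg (by omega), if_neg (by omega), if_neg (by omega)]
  · simp only [psi]; rw [if_neg (by omega), if_neg (by omega)]; simp

theorem not_pred_phi (hn : 2 ≤ n) (hg : Good (2*n) g) : ¬ Pred n (phi n g) := by
  obtain ⟨hr, hinv, hid, halt, hav⟩ := hg
  have hc1 : g (2*n-1) < 2*n := hr _ (by omega)
  have hc3 : g (2*n-1) % 2 = 1 := by
    by_contra hcon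
    have hgc : g (g (2*n-1)) = 2*n-1 := hinv _
    have hlt : g (2*n-1) < 2*n-1 := by
      rcases Nat.lt_or_ge (g (2*n-1)) (2*n-1) with h | h
      · exact h
      · have : g (2*n-1) = 2*n-1 := by omega
        rw [this] at hcon; omega
    have h := halt (g (2*n-1)) (by omega)
    rw [hgc] at h
    have h2 : g (g (2*n-1) + 1) < 2*n := hr _ (by omega)
    have h3 : 2*n-1 < g (g (2*n-1) + 1) := h.2 (by omega)
    omega
  have hE : g (2*n-2) < g (2*n-1) := by
    have h := halt (2*n-2) (by omega)
    rw [show 2*n-2+1 = 2*n-1 by omega] at h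
    exact h.2 (by omega)
  rintro ⟨hp1, hp2⟩
  have e1 : phi n g (2*n) = g (2*n-1) := by simp [phi]
  have e2 : phi n g (2*n-2) = g (2*n-2) := by
    simp only [phi]
    rw [if_neg (by omega), if_neg (by omega), if_neg (by omega)]
  rw [e1] at hp2
  rw [e2] at hp1
  omega

theorem phi_phiInv (hn : 2 ≤ n) (hf : Good (2*n+1) f) (hP : ¬ Pred n f) :
    phi n (phiInv n f) = f := by
  have hc2 := L2' hn hf
  have hL1 := L1 hn hf
  obtain ⟨hr, hinv, hid, halt, hav⟩ := hf
  have hσ : phiInv n f (2*n-1) = f (2*n) := by simp [phiInv]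
  funext i
  simp only [phi, hσ]
  by_cases h1 : i = 2*n
  · rw [if_pos h1, h1]
  · rw [if_neg h1]
    by_cases h2 : i = f (2*n)
    · rw [if_pos h2, h2, hinv]
    · rw [if_neg h2]
      by_cases h3 : i = 2*n-1
      · rw [if_pos h3, h3]
        rcases hL1 with h | h
        · omega
        · have := congrArg f h; rw [hinv] at this; omega
      · rw [if_neg h3]
        simp only [phiInv]
        rw [if_neg h3, if_neg h2]
        by_cases h4 : 2*n ≤ i
        · rw [if_pos h4]; exact (hid i (by omega)).symm
        · rw [if_neg h4]

theorem psi_psiInv (hn : 2 ≤ n) (hf : Good (2*n+1) f) (hP : Pred n f) :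
    psi n (psiInv n f) = f := by
  have hL1 := L1 hn hf
  obtain ⟨hr, hinv, hid, halt, hav⟩ := hf
  obtain ⟨hP1, hP2⟩ := hP
  have hf3 : f (2*n-3) = 2*n := by
    have := congrArg f hP2; rw [hinv] at this; omega
  have hf1 : f (2*n-1) = 2*n-1 := by
    rcases hL1 with h | h
    · exact h
    · have := congrArg f h; rw [hinv] at this; omega
  funext i
  simp only [psi, psiInv]
  by_cases h1 : i < 2*n-3
  · rw [if_pos h1, if_pos h1]
  · rw [if_neg h1]
    by_cases h2 : i = 2*n-3
    · rw [if_pos h2, h2, hf3]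
    · rw [if_neg h2]
      by_cases h3 : i = 2*n
      · rw [if_pos h3, h3, hP2]
      · rw [if_neg h3]
        by_cases h4 : i = 2*n-2
        · rw [h4, hP1]
        · by_cases h5 : i = 2*n-1
          · rw [h5, hf1]
          · exact (hid i (by omega)).symm

theorem phiInv_phi (hn : 2 ≤ n) (hg : Good (2*n) g) : phiInv n (phi n g) = g := by
  obtain ⟨hr, hinv, hid, halt, hav⟩ := hg
  have hc1 : g (2*n-1) < 2*n := hr _ (by omega)
  have hπ2n : phi n g (2*n) = g (2*n-1) := by simp [phi]
  funext i
  simp only [phiInv, hπ2n]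
  by_cases h1 : i = 2*n-1
  · rw [if_pos h1, h1]
  · rw [if_neg h1]
    by_cases h2 : i = g (2*n-1)
    · rw [if_pos h2, h2, hinv]
    · rw [if_neg h2]
      by_cases h3 : 2*n ≤ i
      · rw [if_pos h3]; exact (hid i h3).symm
      · rw [if_neg h3]
        simp only [phi]
        rw [if_neg (by omega), if_neg h2, if_neg h1]

theorem psiInv_psi (hn : 2 ≤ n) (ht : Good (2*n-3) t) : psiInv n (psi n t) = t := by
  obtain ⟨hr, hinv, hid, halt, hav⟩ := ht
  funext i
  simp only [psiInv, psi]
  by_cases h1 : i < 2*n-3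
  · rw [if_pos h1, if_pos h1]
  · rw [if_neg h1]
    exact (hid i (by omega)).symm

end Core

def coreEquiv (n : ℕ) (hn : 2 ≤ n) :
    {f : ℕ → ℕ // Good (2*n+1) f} ≃
      {f : ℕ → ℕ // Good (2*n) f} ⊕ {f : ℕ → ℕ // Good (2*n-3) f} where
  toFun f :=
    if h : Pred n f.1 then .inr ⟨psiInv n f.1, good_psiInv hn f.2 h⟩
    else .inl ⟨phiInv n f.1, good_phiInv hn f.2 h⟩
  invFun x := x.elim (fun g => ⟨phi n g.1, good_phi hn g.2⟩)
    (fun t => ⟨psi n t.1, good_psi hn t.2⟩)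
  left_inv f := by
    dsimp only
    by_cases h : Pred n f.1
    · rw [dif_pos h]
      exact Subtype.ext (psi_psiInv hn f.2 h)
    · rw [dif_neg h]
      exact Subtype.ext (phi_phiInv hn f.2 h)
  right_inv x := by
    rcases x with g | t
    · simp only [Sum.elim_inl]
      show (if h : Pred n (phi n g.1) then _ else _) = _
      rw [dif_neg (not_pred_phi hn g.2)]
      exact congrArg Sum.inl (Subtype.ext (phiInv_phi hn g.2))
    · simp only [Sum.elim_inr]
      show (if h : Pred n (psi n t.1) then _ else _) = _
      rw [dif_pos (pred_psi hn)]
      exact congrArg Sum.inr (Subtype.ext (psiInv_psi hn t.2))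

end AIRec

/-- For n ≥ 2, |AI_{2n+1}(4321)| = |AI_{2n}(4321)| + |AI_{2n-3}(4321)|. -/
theorem card_AI_odd_avoiding_4321_rec (n : ℕ) (hn : 2 ≤ n) :
    Nat.card {π : Equiv.Perm (Fin (2 * n + 1)) //
      IsInvolution π ∧ IsAlternating π ∧ Avoids π p4321} =
    Nat.card {π : Equiv.Perm (Fin (2 * n)) //
      IsInvolution π ∧ IsAlternating π ∧ Avoids π p4321} +
    Nat.card {π : Equiv.Perm (Fin (2 * n - 3)) //
      IsInvolution π ∧ IsAlternating π ∧ Avoids π p4321} := by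
  have e := (AIRec.modelEquiv (2*n+1)).trans ((AIRec.coreEquiv n hn).trans
    (Equiv.sumCongr (AIRec.modelEquiv (2*n)).symm (AIRec.modelEquiv (2*n-3)).symm))
  rw [Nat.card_congr e, Nat.card_sum]
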